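/- arXiv:1810.03483 — 5 statements merged into one kernel-verified Lean document; each statement's English description precedes it below -/
import Mathlib

section
/- Let a, ε ∈ ℝ with a > 0 and 0 < ε < 1. Then for every z > 0, a·ln(a/z) − (a − z) − a·(ε + ln(1 − ε)) ≥ ε·|z − a|. -/
lemma ln_ge_one_sub_inv (x : ℝ) (hx : 0 < x) : 1 - 1/x ≤ Real.log x := by
  have h := Real.log_le_sub_one_of_pos (show 0 < x⁻¹ by positivity)
  rw [Real.log_inv] at h
  have : (1:ℝ)/x = x⁻¹ := one_div x
  linarith [h, this.le]

lemma exp_two_mul_bound (x : ℝ) (hx : 0 ≤ x) :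
    (1 - x) * Real.exp (2*x) ≤ 1 + x := by
  set f : ℝ → ℝ := fun t => (1+t) - (1-t)*Real.exp (2*t) with hf
  have hd : ∀ t : ℝ, HasDerivAt f
      (1 - ((-1)*Real.exp (2*t) + (1-t)*(Real.exp (2*t)*2))) t := by
    intro t
    have h1 : HasDerivAt (fun s : ℝ => 1+s) 1 t := (hasDerivAt_id t).const_add 1
    have h2 : HasDerivAt (fun s : ℝ => 1-s) (-1) t := (hasDerivAt_id t).const_sub 1
    have h3 : HasDerivAt (fun s : ℝ => Real.exp (2*s)) (Real.exp (2*t)*2) t := by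
      have := ((hasDerivAt_id t).const_mul 2).exp
      simpa using this
    show HasDerivAt (fun s : ℝ => (1+s) - (1-s)*Real.exp (2*s)) _ t
    exact h1.sub (h2.mul h3)
  have hmono : Monotone f := by
    apply monotone_of_deriv_nonneg
    · intro t; exact (hd t).differentiableAt
    · intro t
      rw [(hd t).deriv]
      have hexp : 1 - 2*t ≤ Real.exp (-(2*t)) := by
        have := Real.add_one_le_exp (-(2*t)); linarith
      have hpos : 0 < Real.exp (2*t) := Real.exp_pos _
      have hprod : Real.exp (-(2*t)) * Real.exp (2*t) = 1 := by
        rw [← Real.exp_add]; simp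
      nlinarith [mul_le_mul_of_nonneg_right hexp hpos.le]
  have h0 : f 0 ≤ f x := hmono hx
  have hf0 : f 0 = 0 := by simp [hf]
  have hfx : f x = (1+x) - (1-x)*Real.exp (2*x) := rfl
  linarith

lemma two_eps_le_log (ε : ℝ) (hε0 : 0 < ε) (hε1 : ε < 1) :
    2*ε ≤ Real.log (1+ε) - Real.log (1-ε) := by
  have h1 : (0:ℝ) < 1 - ε := by linarith
  have h2 : Real.exp (2*ε) ≤ (1+ε)/(1-ε) := by
    rw [le_div_iff₀ h1]
    have := exp_two_mul_bound ε hε0.le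
    nlinarith
  have h3 : Real.log (Real.exp (2*ε)) ≤ Real.log ((1+ε)/(1-ε)) :=
    Real.log_le_log (Real.exp_pos _) h2
  rw [Real.log_exp, Real.log_div (by linarith) h1.ne'] at h3
  exact h3

/-- For `a > 0`, `0 < ε < 1` and every `z > 0`,
`a ln(a/z) − (a − z) − a(ε + ln(1 − ε)) ≥ ε |z − a|`. -/
theorem entropy_inequality
    (a ε : ℝ) (ha : 0 < a) (hε0 : 0 < ε) (hε1 : ε < 1) :
    ∀ z : ℝ, 0 < z →
      ε * |z - a| ≤ a * Real.log (a / z) - (a - z) - a * (ε + Real.log (1 - ε)) := by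
  intro z hz
  -- tangent line bound: for c > 0, a log(a/z) ≥ a log c + a - z*c
  have key : ∀ c : ℝ, 0 < c → a * Real.log c + a - z * c ≤ a * Real.log (a/z) := by
    intro c hc
    have hpos : 0 < a/(z*c) := by positivity
    have h := ln_ge_one_sub_inv _ hpos
    have hlog : Real.log (a/(z*c)) = Real.log (a/z) - Real.log c := by
      rw [show a/(z*c) = (a/z)/c by rw [div_div],
        Real.log_div (by positivity : (0:ℝ) < a/z).ne' hc.ne']
    have hinv : 1/(a/(z*c)) = z*c/a := by field_simp
    rw [hlog, hinv] at h
    have := mul_le_mul_of_nonneg_left h ha.le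
    have ha' : a * (z*c/a) = z*c := by field_simp
    nlinarith
  rcases le_total a z with hle | hle
  · rw [abs_of_nonneg (by linarith)]
    have k := key (1-ε) (by linarith)
    nlinarith
  · rw [abs_of_nonpos (by linarith), neg_sub]
    have k := key (1+ε) (by linarith)
    have k2 := two_eps_le_log ε hε0 hε1
    nlinarith [mul_le_mul_of_nonneg_left k2 ha.le]
end

section
/- Fix N ≥ 1 and k > 0, and let G : ℝ^N → ℝ^N be differentiable with each component G_i : ℝ^N → ℝ convex. Let (M, U), (Θ, V) ∈ ℝ^N × ℝ^N with M = (m_1,…,m_N), Θ = (θ_1,…,θ_N), all m_i > 0 and θ_i > 0, and (1/N)Σ_{i=1}^N m_i = (1/N)Σ_{i=1}^N θ_i = 1. Then the Euclidean inner product ⟨F̃(M,U) − F̃(Θ,V), (M,U) − (Θ,V)⟩ ≥ 0. -/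
/-- The discrete entropy-penalized effective Hamiltonian
`H̃(M,U) = (∑ᵢ (mᵢ Gᵢ(U) − (1/k) mᵢ ln mᵢ)) / (∑ᵢ mᵢ)`. -/
noncomputable def Htilde {N : ℕ} (k : ℝ) (G : (Fin N → ℝ) → (Fin N → ℝ))
    (M U : Fin N → ℝ) : ℝ :=
  (∑ i, (M i * G U i - (1 / k) * (M i * Real.log (M i)))) / ∑ i, M i

/-- First block of `F̃(M,U)`: `(−Gᵢ(U) + H̃(M,U) + (1/k) ln mᵢ)ᵢ`. -/
noncomputable def Ftilde1 {N : ℕ} (k : ℝ) (G : (Fin N → ℝ) → (Fin N → ℝ))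
    (M U : Fin N → ℝ) (i : Fin N) : ℝ :=
  -(G U i) + Htilde k G M U + (1 / k) * Real.log (M i)

/-- Second block of `F̃(M,U)` (and of `F̄(M,U)`): the vector `DG(U)ᵀ M`. -/
noncomputable def Ftilde2 {N : ℕ} (G : (Fin N → ℝ) → (Fin N → ℝ))
    (M U : Fin N → ℝ) (j : Fin N) : ℝ :=
  ∑ i, M i * (fderiv ℝ G U) (Pi.single j 1) i

private lemma grad_ineq' {E : Type*} [NormedAddCommGroup E] [NormedSpace ℝ E]
    {f : E → ℝ} (hf : ConvexOn ℝ Set.univ f) {x : E}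
    (hd : DifferentiableAt ℝ f x) (y : E) :
    (fderiv ℝ f x) (y - x) ≤ f y - f x := by
  have hline : HasDerivAt (fun t : ℝ => x + t • (y - x)) (y - x) 0 := by
    simpa using ((hasDerivAt_id (0:ℝ)).smul_const (y - x)).const_add x
  have h0 : x + (0:ℝ) • (y - x) = x := by simp
  have hg : HasDerivAt (fun t : ℝ => f (x + t • (y - x))) (fderiv ℝ f x (y - x)) 0 := by
    have := (h0 ▸ hd.hasFDerivAt).comp_hasDerivAt 0 hline
    rw [h0] at this
    exact this
  have hconv : ConvexOn ℝ Set.univ (fun t : ℝ => f (x + t • (y - x))) := by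
    have h := hf.comp_affineMap (AffineMap.lineMap x y)
    have he : (f ∘ (AffineMap.lineMap x y : ℝ →ᵃ[ℝ] E)) = fun t : ℝ => f (x + t • (y - x)) := by
      funext t
      simp [Function.comp, AffineMap.lineMap_apply_module']
      congr 1
      exact add_comm _ _
    rw [he] at h
    simpa using h
  have := hconv.le_slope_of_hasDerivAt (Set.mem_univ 0) (Set.mem_univ 1) one_pos hg
  simpa [slope_def_field] using this

private lemma sum_single_apply' {N : ℕ} (L : (Fin N → ℝ) →L[ℝ] (Fin N → ℝ))
    (w : Fin N → ℝ) (i : Fin N) :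
    ∑ j, w j * L (Pi.single j 1) i = L w i := by
  have hw : w = ∑ j, w j • (Pi.single j 1 : Fin N → ℝ) := by
    conv_lhs => rw [← Finset.univ_sum_single w]
    refine Finset.sum_congr rfl fun j _ => ?_
    rw [← Pi.single_smul, smul_eq_mul, mul_one]
  conv_rhs => rw [hw]
  rw [map_sum]
  simp [Finset.sum_apply]

private lemma log_mul_nonneg {a b : ℝ} (ha : 0 < a) (hb : 0 < b) :
    0 ≤ (Real.log a - Real.log b) * (a - b) := by
  rcases le_total a b with h | h
  · have := Real.log_le_log ha h
    nlinarith
  · have := Real.log_le_log hb h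
    nlinarith


/-- `F̃` is a monotone operator on the set of positive measures of mean 1:
`⟨F̃(M,U) − F̃(Θ,V), (M,U) − (Θ,V)⟩ ≥ 0`. -/
theorem Ftilde_monotone
    (N : ℕ) (hN : 1 ≤ N) (k : ℝ) (hk : 0 < k)
    (G : (Fin N → ℝ) → (Fin N → ℝ))
    (hGdiff : Differentiable ℝ G)
    (hGconv : ∀ i : Fin N, ConvexOn ℝ Set.univ (fun U => G U i))
    (M U Θ V : Fin N → ℝ)
    (hM : ∀ i, 0 < M i) (hΘ : ∀ i, 0 < Θ i)
    (hMmass : (1 / (N : ℝ)) * ∑ i, M i = 1)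
    (hΘmass : (1 / (N : ℝ)) * ∑ i, Θ i = 1) :
    0 ≤ (∑ i, (Ftilde1 k G M U i - Ftilde1 k G Θ V i) * (M i - Θ i))
        + ∑ j, (Ftilde2 G M U j - Ftilde2 G Θ V j) * (U j - V j) := by
  have hNpos : (0:ℝ) < N := by exact_mod_cast hN
  have hMsum : ∑ i, M i = (N:ℝ) := by
    field_simp at hMmass; linarith
  have hΘsum : ∑ i, Θ i = (N:ℝ) := by
    field_simp at hΘmass; linarith
  -- component derivatives
  have hcomp : ∀ (x : Fin N → ℝ) (i : Fin N),
      HasFDerivAt (fun W => G W i)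
        ((ContinuousLinearMap.proj i).comp (fderiv ℝ G x)) x := by
    intro x i
    exact (ContinuousLinearMap.proj i).hasFDerivAt.comp x (hGdiff x).hasFDerivAt
  have hDU : ∀ i, (fderiv ℝ G U) (V - U) i ≤ G V i - G U i := by
    intro i
    have := grad_ineq' (hGconv i) (hcomp U i).differentiableAt V
    rwa [(hcomp U i).fderiv] at this
  have hDV : ∀ i, (fderiv ℝ G V) (U - V) i ≤ G U i - G V i := by
    intro i
    have := grad_ineq' (hGconv i) (hcomp V i).differentiableAt U
    rwa [(hcomp V i).fderiv] at this
  have hDUneg : ∀ i, -((fderiv ℝ G U) (U - V) i) ≤ G V i - G U i := by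
    intro i
    have h : (fderiv ℝ G U) (V - U) = -((fderiv ℝ G U) (U - V)) := by
      rw [← map_neg]; congr 1; abel
    have := hDU i
    rw [h] at this
    simpa using this
  -- second block rearrangement
  have hS2 : ∑ j, (Ftilde2 G M U j - Ftilde2 G Θ V j) * (U j - V j)
      = ∑ i, (M i * (fderiv ℝ G U) (U - V) i - Θ i * (fderiv ℝ G V) (U - V) i) := by
    have hU : ∀ i, (fderiv ℝ G U) (U - V) i
        = ∑ j, (U j - V j) * (fderiv ℝ G U) (Pi.single j 1) i := by
      intro i
      simpa [Pi.sub_apply] using (sum_single_apply' (fderiv ℝ G U) (U - V) i).symm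
    have hV : ∀ i, (fderiv ℝ G V) (U - V) i
        = ∑ j, (U j - V j) * (fderiv ℝ G V) (Pi.single j 1) i := by
      intro i
      simpa [Pi.sub_apply] using (sum_single_apply' (fderiv ℝ G V) (U - V) i).symm
    simp only [Ftilde2, hU, hV, Finset.mul_sum, ← Finset.sum_sub_distrib, Finset.sum_mul]
    rw [Finset.sum_comm]
    refine Finset.sum_congr rfl fun i _ => Finset.sum_congr rfl fun j _ => by ring
  -- first block rearrangement
  have hS1 : ∑ i, (Ftilde1 k G M U i - Ftilde1 k G Θ V i) * (M i - Θ i)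
      = (Htilde k G M U - Htilde k G Θ V) * (∑ i, M i - ∑ i, Θ i)
        + ∑ i, ((G V i - G U i) + (1/k) * (Real.log (M i) - Real.log (Θ i))) * (M i - Θ i) := by
    rw [← Finset.sum_sub_distrib, Finset.mul_sum, ← Finset.sum_add_distrib]
    refine Finset.sum_congr rfl fun i _ => ?_
    simp only [Ftilde1]
    ring
  rw [hS1, hS2, hMsum, hΘsum, sub_self, mul_zero, zero_add, ← Finset.sum_add_distrib]
  refine Finset.sum_nonneg fun i _ => ?_
  have h1 := hDUneg i
  have h2 := hDV i
  have h3 := log_mul_nonneg (hM i) (hΘ i)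
  have h4 := (hM i)
  have h5 := (hΘ i)
  have h6 : 0 < 1/k := by positivity
  nlinarith [mul_le_mul_of_nonneg_left h1 h4.le, mul_le_mul_of_nonneg_left h2 h5.le]
end

section
/- Fix N ≥ 1 and k > 0, and let G : ℝ^N → ℝ^N be differentiable with each component G_i convex. Let 0 < T < +∞ and let (M, U) : [0, T) → ℝ^N × ℝ^N, M(t) = (m_1(t),…,m_N(t)), U(t) = (u_1(t),…,u_N(t)), be a differentiable solution of the discrete Hessian Riemannian flow with m_i(t) > 0 for all i and t ∈ [0, T), and (1/N)Σ_{i=1}^N m_i(0) = 1. Suppose there exists (M*, U*) ∈ ℝ^N × ℝ^N with all components m*_i > 0, (1/N)Σ_{i=1}^N m*_i = 1, and F̃(M*, U*) = 0. Then sup_{t ∈ [0,T)} (Σ_{j=1}^N (m_j(t)² + u_j(t)²))^{1/2} < +∞. -/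
open Set Finset

lemma grad_ineq {N : ℕ} {G : (Fin N → ℝ) → (Fin N → ℝ)}
    (hGdiff : Differentiable ℝ G)
    (hGconv : ∀ i : Fin N, ConvexOn ℝ Set.univ (fun U => G U i))
    (i : Fin N) (x y : Fin N → ℝ) :
    (fderiv ℝ G x) (y - x) i ≤ G y i - G x i := by
  set v := y - x with hv
  have hγ : HasDerivAt (fun t : ℝ => x + t • v) v 0 := by
    simpa using ((hasDerivAt_id (0:ℝ)).smul_const v).const_add x
  set f : (Fin N → ℝ) → ℝ := fun U => G U i with hf
  have hfd : HasFDerivAt f ((ContinuousLinearMap.proj i).comp (fderiv ℝ G x)) x :=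
    (ContinuousLinearMap.proj i (R := ℝ) (φ := fun _ : Fin N => ℝ)).hasFDerivAt.comp x
      (hGdiff x).hasFDerivAt
  have hx0 : x + (0:ℝ) • v = x := by simp
  have hg : HasDerivAt (fun t : ℝ => f (x + t • v)) ((fderiv ℝ G x) v i) 0 := by
    have := (hx0 ▸ hfd).comp_hasDerivAt 0 hγ
    simpa [Function.comp_def] using this
  have hconv : ConvexOn ℝ Set.univ (fun t : ℝ => f (x + t • v)) := by
    refine ⟨convex_univ, ?_⟩
    intro a _ b _ p q hp hq hpq
    have hx' : x + (p * a + q * b) • v = p • (x + a • v) + q • (x + b • v) := by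
      have h1 : p • (x + a • v) + q • (x + b • v) = (p + q) • x + (p * a + q * b) • v := by
        module
      rw [h1, hpq, one_smul]
    simp only [smul_eq_mul, hx']
    exact (hGconv i).2 (mem_univ _) (mem_univ _) hp hq hpq
  have := hconv.le_slope_of_hasDerivAt (mem_univ (0:ℝ)) (mem_univ (1:ℝ)) zero_lt_one hg
  rw [slope_def_field] at this
  simpa [f, hv] using this

lemma apply_sum_single {N : ℕ} (L : (Fin N → ℝ) →L[ℝ] (Fin N → ℝ)) (v : Fin N → ℝ) (i : Fin N) :
    ∑ j, v j * L (Pi.single j 1) i = L v i := by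
  have hv : ∑ j, v j • (Pi.single j 1 : Fin N → ℝ) = v := by
    funext x
    simp [Finset.sum_apply, Pi.single_apply]
  calc ∑ j, v j * L (Pi.single j 1) i = (∑ j, v j • L (Pi.single j 1)) i := by
        simp [Finset.sum_apply]
    _ = L (∑ j, v j • (Pi.single j 1 : Fin N → ℝ)) i := by
        rw [map_sum]
        simp [map_smul]
    _ = L v i := by rw [hv]

lemma entropy_nonneg {a b : ℝ} (ha : 0 < a) (hb : 0 < b) :
    0 ≤ a * Real.log a - a * Real.log b - a + b := by
  have h := Real.log_le_sub_one_of_pos (div_pos hb ha)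
  rw [Real.log_div hb.ne' ha.ne'] at h
  have h2 : a * (Real.log b - Real.log a) ≤ a * (b / a - 1) :=
    mul_le_mul_of_nonneg_left h ha.le
  have h3 : a * (b / a - 1) = b - a := by field_simp
  nlinarith



/-- First block of `F̄(M,U)`: `(mᵢ(−Gᵢ(U) + H̃(M,U) + (1/k) ln mᵢ))ᵢ`. -/
noncomputable def Fbar1 {N : ℕ} (k : ℝ) (G : (Fin N → ℝ) → (Fin N → ℝ))
    (M U : Fin N → ℝ) (i : Fin N) : ℝ :=
  M i * Ftilde1 k G M U i

lemma sum_Fbar1_eq_zero {N : ℕ} (hN : 1 ≤ N) (k : ℝ) (G : (Fin N → ℝ) → (Fin N → ℝ))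
    (M U : Fin N → ℝ) (hM : ∀ i, 0 < M i) :
    ∑ i, Fbar1 k G M U i = 0 := by
  haveI : Nonempty (Fin N) := ⟨⟨0, hN⟩⟩
  have hS : (0:ℝ) < ∑ i, M i := Finset.sum_pos (fun i _ => hM i) Finset.univ_nonempty
  have hH : Htilde k G M U * ∑ i, M i
      = ∑ i, (M i * G U i - (1 / k) * (M i * Real.log (M i))) := by
    rw [Htilde, div_mul_cancel₀ _ hS.ne']
  have hterm : ∀ i : Fin N, Fbar1 k G M U i
      = M i * Htilde k G M U - (M i * G U i - (1 / k) * (M i * Real.log (M i))) := by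
    intro i; simp only [Fbar1, Ftilde1]; ring
  rw [Finset.sum_congr rfl fun i _ => hterm i, Finset.sum_sub_distrib, ← Finset.sum_mul, ← hH]
  ring

lemma mono_key {N : ℕ} (k : ℝ) (hk : 0 < k) (G : (Fin N → ℝ) → (Fin N → ℝ))
    (hGdiff : Differentiable ℝ G)
    (hGconv : ∀ i : Fin N, ConvexOn ℝ Set.univ (fun U => G U i))
    (M U Mstar Ustar : Fin N → ℝ)
    (hM : ∀ i, 0 < M i) (hMstar : ∀ i, 0 < Mstar i)
    (hmass : ∑ i, M i = ∑ i, Mstar i)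
    (hstar1 : ∀ i, Ftilde1 k G Mstar Ustar i = 0)
    (hstar2 : ∀ j, Ftilde2 G Mstar Ustar j = 0) :
    0 ≤ ∑ i, (M i - Mstar i) * Ftilde1 k G M U i
      + ∑ j, (U j - Ustar j) * Ftilde2 G M U j := by
  set L : (Fin N → ℝ) →L[ℝ] (Fin N → ℝ) := fderiv ℝ G U with hL
  set Ls : (Fin N → ℝ) →L[ℝ] (Fin N → ℝ) := fderiv ℝ G Ustar with hLs
  -- second sum rewritten
  have h2 : ∑ j, (U j - Ustar j) * Ftilde2 G M U j
      = ∑ i, M i * L (U - Ustar) i := by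
    simp only [Ftilde2, Finset.mul_sum]
    rw [Finset.sum_comm]
    refine Finset.sum_congr rfl fun i _ => ?_
    rw [← apply_sum_single L (U - Ustar) i, Finset.mul_sum]
    refine Finset.sum_congr rfl fun j _ => ?_
    simp only [Pi.sub_apply]; ring
  have h2s : (0:ℝ) = ∑ i, Mstar i * Ls (U - Ustar) i := by
    have : ∑ j, (U j - Ustar j) * Ftilde2 G Mstar Ustar j
        = ∑ i, Mstar i * Ls (U - Ustar) i := by
      simp only [Ftilde2, Finset.mul_sum]
      rw [Finset.sum_comm]
      refine Finset.sum_congr rfl fun i _ => ?_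
      rw [← apply_sum_single Ls (U - Ustar) i, Finset.mul_sum]
      refine Finset.sum_congr rfl fun j _ => ?_
      simp only [Pi.sub_apply]; ring
    rw [← this]
    simp [hstar2]
  -- rewrite first sum using star equation
  have hlog : ∀ i, (1/k) * Real.log (Mstar i) = G Ustar i - Htilde k G Mstar Ustar := by
    intro i
    have := hstar1 i
    simp only [Ftilde1] at this
    linarith
  have h1 : ∑ i, (M i - Mstar i) * Ftilde1 k G M U i
      = ∑ i, (M i - Mstar i) * (G Ustar i - G U i)
        + (Htilde k G M U - Htilde k G Mstar Ustar) * (∑ i, M i - ∑ i, Mstar i)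
        + (1/k) * ∑ i, (M i - Mstar i) * (Real.log (M i) - Real.log (Mstar i)) := by
    have : ∀ i, (M i - Mstar i) * Ftilde1 k G M U i
        = (M i - Mstar i) * (G Ustar i - G U i)
          + (Htilde k G M U - Htilde k G Mstar Ustar) * (M i - Mstar i)
          + (1/k) * ((M i - Mstar i) * (Real.log (M i) - Real.log (Mstar i))) := by
      intro i
      have hl := hlog i
      simp only [Ftilde1]
      linear_combination (M i - Mstar i) * hl
    rw [Finset.sum_congr rfl fun i _ => this i]
    rw [Finset.sum_add_distrib, Finset.sum_add_distrib, ← Finset.mul_sum, ← Finset.mul_sum,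
      Finset.sum_sub_distrib]
  rw [h1, h2, hmass, sub_self, mul_zero, add_zero]
  have hsplit : ∑ i, (M i - Mstar i) * (G Ustar i - G U i) + ∑ i, M i * L (U - Ustar) i
      = ∑ i, ((M i * (L (U - Ustar) i - (G U i - G Ustar i))
          + Mstar i * ((G U i - G Ustar i) - Ls (U - Ustar) i))
        + Mstar i * Ls (U - Ustar) i) := by
    rw [← Finset.sum_add_distrib]
    exact Finset.sum_congr rfl fun i _ => by ring
  have hconv1 : ∀ i, 0 ≤ M i * (L (U - Ustar) i - (G U i - G Ustar i)) := by
    intro i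
    have h := grad_ineq hGdiff hGconv i U Ustar
    have hneg : L (Ustar - U) i = -(L (U - Ustar) i) := by
      have : (Ustar - U) = -(U - Ustar) := by ring
      rw [this, map_neg]; simp
    rw [← hL] at h
    rw [hneg] at h
    have : G U i - G Ustar i ≤ L (U - Ustar) i := by linarith
    exact mul_nonneg (hM i).le (by linarith)
  have hconv2 : ∀ i, 0 ≤ Mstar i * ((G U i - G Ustar i) - Ls (U - Ustar) i) := by
    intro i
    have h := grad_ineq hGdiff hGconv i Ustar U
    rw [← hLs] at h
    exact mul_nonneg (hMstar i).le (by linarith)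
  have hlogterm : 0 ≤ ∑ i, (M i - Mstar i) * (Real.log (M i) - Real.log (Mstar i)) := by
    refine Finset.sum_nonneg fun i _ => ?_
    rcases le_total (Mstar i) (M i) with h | h
    · have := Real.log_le_log (hMstar i) h
      nlinarith
    · have := Real.log_le_log (hM i) h
      nlinarith
  have hmain : 0 ≤ ∑ i, (M i - Mstar i) * (G Ustar i - G U i) + ∑ i, M i * L (U - Ustar) i := by
    rw [hsplit, Finset.sum_add_distrib, ← h2s, add_zero]
    exact Finset.sum_nonneg fun i _ => add_nonneg (hconv1 i) (hconv2 i)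
  have hk' : 0 ≤ (1/k) := by positivity
  nlinarith [mul_nonneg hk' hlogterm]

/-- a positive solution of the discrete Hessian Riemannian flow on `[0,T)`,
`T < ∞`, with initial mass `1`, stays bounded, provided the discrete stationary problem
`F̃(M*,U*) = 0` has a positive solution of mass `1`. -/
theorem discrete_HRF_solution_bounded
    (N : ℕ) (hN : 1 ≤ N) (k : ℝ) (hk : 0 < k)
    (G : (Fin N → ℝ) → (Fin N → ℝ))
    (hGdiff : Differentiable ℝ G)
    (hGconv : ∀ i : Fin N, ConvexOn ℝ Set.univ (fun U => G U i))
    (T : ℝ) (hT0 : 0 < T)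
    (M U : ℝ → Fin N → ℝ)
    (hflowM : ∀ t ∈ Set.Ico (0 : ℝ) T, ∀ i,
      HasDerivAt (fun s => M s i) (-(Fbar1 k G (M t) (U t) i)) t)
    (hflowU : ∀ t ∈ Set.Ico (0 : ℝ) T, ∀ i,
      HasDerivAt (fun s => U s i) (-(Ftilde2 G (M t) (U t) i)) t)
    (hMpos : ∀ t ∈ Set.Ico (0 : ℝ) T, ∀ i, 0 < M t i)
    (hmass0 : (1 / (N : ℝ)) * ∑ i, M 0 i = 1)
    (Mstar Ustar : Fin N → ℝ)
    (hMstarpos : ∀ i, 0 < Mstar i)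
    (hstarmass : (1 / (N : ℝ)) * ∑ i, Mstar i = 1)
    (hstar1 : ∀ i, Ftilde1 k G Mstar Ustar i = 0)
    (hstar2 : ∀ j, Ftilde2 G Mstar Ustar j = 0) :
    ∃ C : ℝ, ∀ t ∈ Set.Ico (0 : ℝ) T,
      Real.sqrt (∑ j, ((M t j) ^ 2 + (U t j) ^ 2)) ≤ C := by
  haveI : Nonempty (Fin N) := ⟨⟨0, hN⟩⟩
  have hNpos : (0:ℝ) < N := by exact_mod_cast Nat.lt_of_lt_of_le Nat.zero_lt_one hN
  have hNne : (N:ℝ) ≠ 0 := hNpos.ne'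
  have hM0 : ∑ i, M 0 i = (N:ℝ) := by field_simp at hmass0; linarith
  have hMs : ∑ i, Mstar i = (N:ℝ) := by field_simp at hstarmass; linarith
  -- mass conservation
  have hmassT : ∀ t ∈ Set.Ico (0:ℝ) T, ∑ i, M t i = (N:ℝ) := by
    intro t ht
    have hcont : ContinuousOn (fun r => ∑ i, M r i) (Icc 0 t) := by
      intro s hs
      have hs' : s ∈ Set.Ico (0:ℝ) T := ⟨hs.1, lt_of_le_of_lt hs.2 ht.2⟩
      exact (HasDerivAt.fun_sum fun i _ => hflowM s hs' i).continuousAt.continuousWithinAt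
    have hderiv : ∀ x ∈ Set.Ico (0:ℝ) t, HasDerivWithinAt (fun r => ∑ i, M r i) 0 (Ici x) x := by
      intro x hx
      have hx' : x ∈ Set.Ico (0:ℝ) T := ⟨hx.1, hx.2.trans ht.2⟩
      have hd := HasDerivAt.fun_sum fun i (_ : i ∈ Finset.univ) => hflowM x hx' i
      have hz : ∑ i, -(Fbar1 k G (M x) (U x) i) = 0 := by
        rw [Finset.sum_neg_distrib, sum_Fbar1_eq_zero hN k G _ _ (hMpos x hx'), neg_zero]
      rw [hz] at hd
      exact hd.hasDerivWithinAt
    have := constant_of_has_deriv_right_zero hcont hderiv t (right_mem_Icc.mpr ht.1)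
    rw [this, hM0]
  -- the Lyapunov function
  set W : ℝ → ℝ := fun t =>
    (∑ i, (Mstar i * Real.log (Mstar i) - Mstar i * Real.log (M t i) - Mstar i + M t i))
    + (1/2) * ∑ j, (U t j - Ustar j)^2 with hWdef
  have hWder : ∀ s ∈ Set.Ico (0:ℝ) T, HasDerivAt W
      (-(∑ i, (M s i - Mstar i) * Ftilde1 k G (M s) (U s) i
        + ∑ j, (U s j - Ustar j) * Ftilde2 G (M s) (U s) j)) s := by
    intro s hs
    have hEde : HasDerivAt
        (fun t => ∑ i, (Mstar i * Real.log (Mstar i) - Mstar i * Real.log (M t i)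
          - Mstar i + M t i))
        (∑ i, -((M s i - Mstar i) * Ftilde1 k G (M s) (U s) i)) s := by
      refine HasDerivAt.fun_sum fun i _ => ?_
      have hm := hflowM s hs i
      have hmpos := hMpos s hs i
      have hlog : HasDerivAt (fun r => Real.log (M r i))
          (-(Fbar1 k G (M s) (U s) i) / M s i) s := hm.log hmpos.ne'
      have hD := (((hlog.const_mul (Mstar i)).const_sub
        (Mstar i * Real.log (Mstar i))).sub_const (Mstar i)).add hm
      have heq : -(Mstar i * (-(Fbar1 k G (M s) (U s) i) / M s i))
          + -(Fbar1 k G (M s) (U s) i)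
          = -((M s i - Mstar i) * Ftilde1 k G (M s) (U s) i) := by
        rw [Fbar1]
        field_simp
        ring
      exact heq ▸ hD
    have hQde : HasDerivAt (fun t => ∑ j, (U t j - Ustar j)^2)
        (∑ j, 2 * (U s j - Ustar j) * (-(Ftilde2 G (M s) (U s) j))) s := by
      refine HasDerivAt.fun_sum fun j _ => ?_
      have hu := (hflowU s hs j).sub_const (Ustar j)
      have := hu.fun_pow 2
      simpa using this
    have hsum := hEde.add (hQde.const_mul (1/2))
    have heq2 : (∑ i, -((M s i - Mstar i) * Ftilde1 k G (M s) (U s) i))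
        + (1/2) * ∑ j, 2 * (U s j - Ustar j) * (-(Ftilde2 G (M s) (U s) j))
        = -(∑ i, (M s i - Mstar i) * Ftilde1 k G (M s) (U s) i
          + ∑ j, (U s j - Ustar j) * Ftilde2 G (M s) (U s) j) := by
      rw [Finset.sum_neg_distrib,
        Finset.sum_congr rfl (fun j (_ : j ∈ Finset.univ) =>
          (by ring : 2 * (U s j - Ustar j) * (-(Ftilde2 G (M s) (U s) j))
            = (-2) * ((U s j - Ustar j) * Ftilde2 G (M s) (U s) j))),
        ← Finset.mul_sum]
      ring
    exact heq2 ▸ hsum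
  -- W is bounded by W 0
  have hWle : ∀ t ∈ Set.Ico (0:ℝ) T, W t ≤ W 0 := by
    intro t ht
    rcases eq_or_lt_of_le ht.1 with h0 | h0
    · rw [← h0]
    · have hsub : Icc (0:ℝ) t ⊆ Set.Ico 0 T := fun s hs => ⟨hs.1, lt_of_le_of_lt hs.2 ht.2⟩
      have hcont : ContinuousOn W (Icc 0 t) :=
        fun s hs => ((hWder s (hsub hs)).continuousAt).continuousWithinAt
      have hdiff : DifferentiableOn ℝ W (interior (Icc (0:ℝ) t)) := by
        rw [interior_Icc]
        exact fun s hs =>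
          ((hWder s (hsub (Ioo_subset_Icc_self hs))).differentiableAt).differentiableWithinAt
      have hnonpos : ∀ s ∈ interior (Icc (0:ℝ) t), deriv W s ≤ 0 := by
        rw [interior_Icc]
        intro s hs
        have hs' : s ∈ Set.Ico (0:ℝ) T := hsub (Ioo_subset_Icc_self hs)
        rw [(hWder s hs').deriv]
        have := mono_key k hk G hGdiff hGconv (M s) (U s) Mstar Ustar (hMpos s hs')
          hMstarpos (by rw [hmassT s hs', hMs]) hstar1 hstar2
        linarith
      exact antitoneOn_of_deriv_nonpos (convex_Icc 0 t) hcont hdiff hnonpos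
        (left_mem_Icc.mpr h0.le) (right_mem_Icc.mpr h0.le) h0.le
  -- conclude
  refine ⟨Real.sqrt ((N:ℝ)^2 + (4 * W 0 + 2 * ∑ j, (Ustar j)^2)), fun t ht => ?_⟩
  apply Real.sqrt_le_sqrt
  have hEpos : 0 ≤ ∑ i, (Mstar i * Real.log (Mstar i) - Mstar i * Real.log (M t i)
      - Mstar i + M t i) :=
    Finset.sum_nonneg fun i _ => entropy_nonneg (hMstarpos i) (hMpos t ht i)
  have hQle : ∑ j, (U t j - Ustar j)^2 ≤ 2 * W 0 := by
    have h1 := hWle t ht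
    simp only [hWdef] at h1 ⊢
    linarith
  have hm2 : ∑ j, (M t j)^2 ≤ (N:ℝ)^2 := by
    have hmb : ∀ j, M t j ≤ (N:ℝ) := by
      intro j
      have h1 : M t j ≤ ∑ i, M t i :=
        Finset.single_le_sum (fun i _ => (hMpos t ht i).le) (Finset.mem_univ j)
      rw [hmassT t ht] at h1
      exact h1
    calc ∑ j, (M t j)^2 ≤ ∑ j, (N:ℝ) * M t j :=
          Finset.sum_le_sum fun j _ => by nlinarith [hMpos t ht j, hmb j]
      _ = (N:ℝ) * ∑ j, M t j := by rw [Finset.mul_sum]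
      _ = (N:ℝ)^2 := by rw [hmassT t ht]; ring
  have hu2 : ∑ j, (U t j)^2 ≤ 2 * ∑ j, (U t j - Ustar j)^2 + 2 * ∑ j, (Ustar j)^2 := by
    have h1 : ∀ j : Fin N, (U t j)^2 ≤ 2*(U t j - Ustar j)^2 + 2*(Ustar j)^2 := by
      intro j
      nlinarith [sq_nonneg (U t j - 2 * Ustar j)]
    calc ∑ j, (U t j)^2 ≤ ∑ j, (2*(U t j - Ustar j)^2 + 2*(Ustar j)^2) :=
          Finset.sum_le_sum fun j _ => h1 j
      _ = 2 * ∑ j, (U t j - Ustar j)^2 + 2 * ∑ j, (Ustar j)^2 := by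
          rw [Finset.sum_add_distrib, ← Finset.mul_sum, ← Finset.mul_sum]
  have hsplit : ∑ j, ((M t j)^2 + (U t j)^2) = ∑ j, (M t j)^2 + ∑ j, (U t j)^2 :=
    Finset.sum_add_distrib
  rw [hsplit]
  linarith
end

section
/- Fix an integer N ≥ 1, let h = 1/N, P ∈ ℝ, x_j = j/N, and index vectors cyclically by j ∈ ℤ/Nℤ. For U = (u_j) ∈ ℝ^N define G_j(U) = (1/2)(min{P + (u_{j+1} − u_j)/h, 0})² + (1/2)(max{P + (u_j − u_{j−1})/h, 0})² − sin(2π x_j). Then each G_j is differentiable on ℝ^N, and for all U, V ∈ ℝ^N: Σ_{j} (G_j(U) − G_j(V) − ⟨∇G_j(V), U − V⟩) = (1/2) Σ_{j} ((u_j − u_{j−1})/h − (v_j − v_{j−1})/h)². In particular, Σ_{j} ((u_j − u_{j+1})/h − (v_j − v_{j+1})/h)² ≤ 2 Σ_{j} (G_j(U) − G_j(V) − ⟨∇G_j(V), U − V⟩), i.e. the numerical Poincaré inequality holds with constant ϱ = 2. -/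
/-- The discretized Hamiltonian `G_j` of the 1-d quadratic Hamiltonian
`H(x,p) = |p|²/2 − sin(2πx)` on a cyclic grid with `N` points and mesh size `h`. -/
noncomputable def discreteG (N : ℕ) [NeZero N] (h P : ℝ) (j : ZMod N)
    (U : ZMod N → ℝ) : ℝ :=
  (1 / 2) * (min (P + (U (j + 1) - U j) / h) 0) ^ 2
    + (1 / 2) * (max (P + (U j - U (j - 1)) / h) 0) ^ 2
    - Real.sin (2 * Real.pi * ((j.val : ℝ) / N))

open Real Asymptotics

/-- derivative of `(1/2) (min x 0)^2` is `min x 0`. -/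
lemma hasDerivAt_half_min_sq (x : ℝ) :
    HasDerivAt (fun y : ℝ => (1 / 2) * (min y 0) ^ 2) (min x 0) x := by
  rcases lt_trichotomy x 0 with hx | hx | hx
  · have : HasDerivAt (fun y : ℝ => (1 / 2) * y ^ 2) x x := by
      simpa using ((hasDerivAt_pow 2 x).const_mul (1/2 : ℝ))
    refine (this.congr_of_eventuallyEq ?_).congr_deriv (by rw [min_eq_left hx.le])
    filter_upwards [Iio_mem_nhds hx] with y hy
    rw [min_eq_left (le_of_lt hy)]
  · subst hx
    rw [min_self]
    rw [hasDerivAt_iff_isLittleO]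
    simp only [min_self, ne_eq, OfNat.ofNat_ne_zero, not_false_eq_true, zero_pow, mul_zero,
      sub_zero, smul_zero]
    rw [isLittleO_iff]
    intro c hc
    filter_upwards [Metric.ball_mem_nhds (0:ℝ) hc] with y hy
    simp only [Metric.mem_ball, Real.dist_eq, sub_zero] at hy
    have h1 : |min y 0| ≤ |y| := by
      rcases le_total y 0 with h | h
      · rw [min_eq_left h]
      · rw [min_eq_right h]; simp [abs_nonneg]
    rw [Real.norm_eq_abs, Real.norm_eq_abs, abs_mul]
    have h2 : |(min y 0)^2| = |min y 0| * |min y 0| := by rw [sq, abs_mul]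
    have h3 : (0:ℝ) ≤ |y| := abs_nonneg y
    have h4 : (0:ℝ) ≤ |min y 0| := abs_nonneg _
    rw [h2]
    have : |(1:ℝ)/2| = 1/2 := by norm_num
    rw [this]
    nlinarith
  · have : HasDerivAt (fun _ : ℝ => (0:ℝ)) 0 x := hasDerivAt_const x 0
    refine (this.congr_of_eventuallyEq ?_).congr_deriv (by rw [min_eq_right hx.le])
    filter_upwards [Ioi_mem_nhds hx] with y hy
    rw [min_eq_right (le_of_lt hy)]
    simp

/-- derivative of `(1/2) (max x 0)^2` is `max x 0`. -/
lemma hasDerivAt_half_max_sq (x : ℝ) :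
    HasDerivAt (fun y : ℝ => (1 / 2) * (max y 0) ^ 2) (max x 0) x := by
  have h : HasDerivAt (fun y : ℝ => (1/2 : ℝ) * (min (-y) 0) ^ 2) (min (-x) 0 * -1) x :=
    (hasDerivAt_half_min_sq (-x)).comp x (hasDerivAt_neg x)
  have hd : min (-x) (0:ℝ) * -1 = max x 0 := by
    rw [show (0:ℝ) = -0 by ring, min_neg_neg, neg_zero]; ring
  refine HasDerivAt.congr_of_eventuallyEq (h.congr_deriv hd)
    (Filter.Eventually.of_forall fun y => ?_)
  have : min (-y) (0:ℝ) = -(max y 0) := by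
    rw [show (0:ℝ) = -0 by ring, min_neg_neg, neg_zero]
  show (1/2 : ℝ) * (max y 0) ^ 2 = (1/2) * (min (-y) 0) ^ 2
  rw [this, neg_sq]

variable {N : ℕ} [NeZero N]

/-- coordinate projection as a continuous linear map. -/
noncomputable def cproj (j : ZMod N) : (ZMod N → ℝ) →L[ℝ] ℝ :=
  ContinuousLinearMap.proj j

lemma hasFDerivAt_inner (P h : ℝ) (j k : ZMod N) (V : ZMod N → ℝ) :
    HasFDerivAt (fun U : ZMod N → ℝ => P + (U j - U k) / h)
      ((1/h : ℝ) • (cproj j - cproj k)) V := by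
  have hl : HasFDerivAt (fun U : ZMod N → ℝ => ((1/h : ℝ) • (cproj j - cproj k)) U)
      ((1/h : ℝ) • (cproj j - cproj k)) V := ContinuousLinearMap.hasFDerivAt _
  refine (hl.const_add P).congr_of_eventuallyEq (Filter.Eventually.of_forall fun U => ?_)
  simp only [cproj, ContinuousLinearMap.coe_smul', Pi.smul_apply,
    ContinuousLinearMap.coe_sub', Pi.sub_apply, ContinuousLinearMap.proj_apply, smul_eq_mul]
  ring

lemma hasFDerivAt_discreteG (h P : ℝ) (j : ZMod N) (V : ZMod N → ℝ) :
    HasFDerivAt (discreteG N h P j)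
      ((min (P + (V (j+1) - V j)/h) 0) • ((1/h : ℝ) • (cproj (j+1) - cproj j))
        + (max (P + (V j - V (j-1))/h) 0) • ((1/h : ℝ) • (cproj j - cproj (j-1)))) V := by
  have h1 := (hasDerivAt_half_min_sq (P + (V (j+1) - V j)/h)).comp_hasFDerivAt V
    (hasFDerivAt_inner P h (j+1) j V)
  have h2 := (hasDerivAt_half_max_sq (P + (V j - V (j-1))/h)).comp_hasFDerivAt V
    (hasFDerivAt_inner P h j (j-1) V)
  have h3 := (h1.add h2).sub_const (Real.sin (2 * Real.pi * ((j.val : ℝ) / N)))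
  exact h3.congr_of_eventuallyEq (Filter.Eventually.of_forall fun U => by
    simp only [discreteG, Pi.add_apply, Function.comp_apply])

lemma fderiv_discreteG_apply (h P : ℝ) (j : ZMod N) (V W : ZMod N → ℝ) :
    fderiv ℝ (discreteG N h P j) V W
      = min (P + (V (j+1) - V j)/h) 0 * ((W (j+1) - W j)/h)
        + max (P + (V j - V (j-1))/h) 0 * ((W j - W (j-1))/h) := by
  rw [(hasFDerivAt_discreteG h P j V).fderiv]
  simp only [ContinuousLinearMap.add_apply, ContinuousLinearMap.coe_smul', Pi.smul_apply,
    ContinuousLinearMap.coe_sub', Pi.sub_apply, cproj, ContinuousLinearMap.proj_apply,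
    smul_eq_mul]
  ring

lemma bregman_pointwise (x y : ℝ) :
    ((1/2)*(min x 0)^2 - (1/2)*(min y 0)^2 - min y 0 * (x - y))
    + ((1/2)*(max x 0)^2 - (1/2)*(max y 0)^2 - max y 0 * (x - y)) = (1/2)*(x-y)^2 := by
  rcases le_total x 0 with hx | hx <;> rcases le_total y 0 with hy | hy <;>
    simp only [min_eq_left, min_eq_right, max_eq_left, max_eq_right, hx, hy,
      min_eq_left hx, min_eq_right hx, max_eq_left hx, max_eq_right hx,
      min_eq_left hy, min_eq_right hy, max_eq_left hy, max_eq_right hy] <;> ring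

lemma term_eq (h P : ℝ) (j : ZMod N) (U V : ZMod N → ℝ) :
    discreteG N h P j U - discreteG N h P j V - fderiv ℝ (discreteG N h P j) V (U - V)
      = ((1/2)*(min (P + (U (j+1) - U j)/h) 0)^2 - (1/2)*(min (P + (V (j+1) - V j)/h) 0)^2
          - min (P + (V (j+1) - V j)/h) 0 * ((P + (U (j+1) - U j)/h) - (P + (V (j+1) - V j)/h)))
        + ((1/2)*(max (P + (U j - U (j-1))/h) 0)^2 - (1/2)*(max (P + (V j - V (j-1))/h) 0)^2
          - max (P + (V j - V (j-1))/h) 0 * ((P + (U j - U (j-1))/h) - (P + (V j - V (j-1))/h))) := by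
  rw [fderiv_discreteG_apply]
  simp only [discreteG, Pi.sub_apply]
  ring

lemma shift_sum (g : ZMod N → ℝ) : ∑ j : ZMod N, g (j - 1) = ∑ j : ZMod N, g j :=
  Fintype.sum_equiv (Equiv.subRight (1 : ZMod N)) _ _ (fun _ => rfl)

/-- with `h = 1/N` and grid points `x_j = j/N`, each `G_j` is differentiable,
the sum of the Bregman divergences of the `G_j` equals
`(1/2) ∑_j ((u_j − u_{j−1})/h − (v_j − v_{j−1})/h)²`, and in particular the numerical
Poincaré inequality holds with constant `ϱ = 2`. -/
theorem discreteG_differentiable_bregman_identity_and_poincare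
    (N : ℕ) [NeZero N] (P h : ℝ) (hh : h = 1 / (N : ℝ)) :
    (∀ j : ZMod N, Differentiable ℝ (discreteG N h P j)) ∧
    (∀ U V : ZMod N → ℝ,
      (∑ j : ZMod N,
          (discreteG N h P j U - discreteG N h P j V
            - fderiv ℝ (discreteG N h P j) V (U - V)))
        = (1 / 2) * ∑ j : ZMod N,
            ((U j - U (j - 1)) / h - (V j - V (j - 1)) / h) ^ 2) ∧
    (∀ U V : ZMod N → ℝ,
      ∑ j : ZMod N, ((U j - U (j + 1)) / h - (V j - V (j + 1)) / h) ^ 2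
        ≤ 2 * ∑ j : ZMod N,
            (discreteG N h P j U - discreteG N h P j V
              - fderiv ℝ (discreteG N h P j) V (U - V))) := by
  have key : ∀ U V : ZMod N → ℝ,
      (∑ j : ZMod N,
          (discreteG N h P j U - discreteG N h P j V
            - fderiv ℝ (discreteG N h P j) V (U - V)))
        = (1 / 2) * ∑ j : ZMod N,
            ((U j - U (j - 1)) / h - (V j - V (j - 1)) / h) ^ 2 := by
    intro U V
    set Bφ : ZMod N → ℝ := fun j =>
      (1/2)*(min (P + (U (j+1) - U j)/h) 0)^2 - (1/2)*(min (P + (V (j+1) - V j)/h) 0)^2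
        - min (P + (V (j+1) - V j)/h) 0 * ((P + (U (j+1) - U j)/h) - (P + (V (j+1) - V j)/h))
      with hBφ
    set Bψ : ZMod N → ℝ := fun j =>
      (1/2)*(max (P + (U (j+1) - U j)/h) 0)^2 - (1/2)*(max (P + (V (j+1) - V j)/h) 0)^2
        - max (P + (V (j+1) - V j)/h) 0 * ((P + (U (j+1) - U j)/h) - (P + (V (j+1) - V j)/h))
      with hBψ
    have step1 : (∑ j : ZMod N,
          (discreteG N h P j U - discreteG N h P j V
            - fderiv ℝ (discreteG N h P j) V (U - V)))
        = ∑ j : ZMod N, (Bφ j + Bψ (j - 1)) := by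
      refine Finset.sum_congr rfl fun j _ => ?_
      rw [term_eq]
      have e1 : j - 1 + 1 = j := by ring
      simp only [hBφ, hBψ, e1]
    rw [step1, Finset.sum_add_distrib, shift_sum Bψ, ← Finset.sum_add_distrib]
    have step2 : ∑ j : ZMod N, (Bφ j + Bψ j)
        = ∑ j : ZMod N, (1/2) * ((U (j+1) - U j)/h - (V (j+1) - V j)/h)^2 := by
      refine Finset.sum_congr rfl fun j _ => ?_
      simp only [hBφ, hBψ]
      linear_combination bregman_pointwise (P + (U (j+1) - U j)/h) (P + (V (j+1) - V j)/h)
    rw [step2, ← Finset.mul_sum]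
    congr 1
    rw [← shift_sum (N := N) (fun j => ((U (j+1) - U j)/h - (V (j+1) - V j)/h)^2)]
    refine Finset.sum_congr rfl fun j _ => ?_
    have e1 : j - 1 + 1 = j := by ring
    simp only [e1]
  refine ⟨fun j V => (hasFDerivAt_discreteG h P j V).differentiableAt, key, ?_⟩
  intro U V
  rw [key U V]
  have l1 : ∑ j : ZMod N, ((U j - U (j + 1)) / h - (V j - V (j + 1)) / h) ^ 2
      = ∑ j : ZMod N, ((U (j+1) - U j)/h - (V (j+1) - V j)/h)^2 :=
    Finset.sum_congr rfl fun j _ => by ring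
  have l2 : ∑ j : ZMod N, ((U j - U (j - 1)) / h - (V j - V (j - 1)) / h) ^ 2
      = ∑ j : ZMod N, ((U (j+1) - U j)/h - (V (j+1) - V j)/h)^2 := by
    rw [← shift_sum (N := N) (fun j => ((U (j+1) - U j)/h - (V (j+1) - V j)/h)^2)]
    refine Finset.sum_congr rfl fun j _ => ?_
    have e1 : j - 1 + 1 = j := by ring
    simp only [e1]
  rw [l1, l2]
  apply le_of_eq
  ring
end

section
/- Let d = 2, H(x,p) = |p|²/2 for x ∈ ℝ², p ∈ ℝ², and P = (1, 0). For every continuously differentiable function f : ℝ → ℝ, the pair m(x₁, x₂) = f(x₂), u ≡ 0 satisfies |P + D_x u(x)|²/2 = 1/2 for all x ∈ ℝ² and div_x(m(x)(P + D_x u(x))) = 0 for all x ∈ ℝ². In particular, taking f 1-periodic, nonnegative, with ∫₀¹ f = 1, one obtains infinitely many distinct ℤ²-periodic solutions m of the system H(x, P + D_x u) = H̄, div(m D_p H(x, P + D_x u)) = 0 with H̄ = 1/2 and u = 0; hence the projected Mather measure of this system is not unique. -/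
open MeasureTheory

/-- The spatial gradient `(D_x f)(x)`, computed componentwise via `fderiv`. -/
noncomputable def pgrad {d : ℕ} (f : (Fin d → ℝ) → ℝ) (x : Fin d → ℝ) : Fin d → ℝ :=
  fun i => fderiv ℝ f x (Pi.single i 1)

/-- The divergence of a vector field `V` at `x`. -/
noncomputable def pdiv {d : ℕ} (V : (Fin d → ℝ) → (Fin d → ℝ)) (x : Fin d → ℝ) : ℝ :=
  ∑ i, fderiv ℝ (fun y => V y i) x (Pi.single i 1)

/-- `ℤ^d`-periodicity of a function on `ℝ^d`. -/
def ZPeriodic {d : ℕ} (f : (Fin d → ℝ) → ℝ) : Prop :=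
  ∀ (z : Fin d → ℤ) (x : Fin d → ℝ), f (x + fun i => (z i : ℝ)) = f x

/- ## Auxiliary lemmas -/

lemma aux_pgrad_zero (x : Fin 2 → ℝ) : pgrad (fun _ : Fin 2 → ℝ => (0 : ℝ)) x = fun _ => 0 := by
  funext i; simp [pgrad, fderiv_const]

lemma aux_fderiv_comp_snd {g : ℝ → ℝ} (hg : Differentiable ℝ g) (x : Fin 2 → ℝ) :
    fderiv ℝ (fun y : Fin 2 → ℝ => g (y 1)) x (Pi.single 0 1) = 0 := by
  have h : HasFDerivAt (fun y : Fin 2 → ℝ => g (y 1))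
      ((deriv g (x 1)) • (ContinuousLinearMap.proj 1 : (Fin 2 → ℝ) →L[ℝ] ℝ)) x :=
    (hg (x 1)).hasDerivAt.comp_hasFDerivAt x (hasFDerivAt_apply 1 x)
  rw [h.fderiv]; simp

lemma aux_gradH (q : Fin 2 → ℝ) (i : Fin 2) :
    pgrad (fun p : Fin 2 → ℝ => (∑ j, p j ^ 2) / 2) q i = q i := by
  have e : (fun p : Fin 2 → ℝ => (∑ j, p j ^ 2) / 2)
      = fun p : Fin 2 → ℝ => (2⁻¹ : ℝ) • (∑ j, p j * p j) := by
    funext p; rw [smul_eq_mul]; simp [sq]; ring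
  have h : HasFDerivAt (fun p : Fin 2 → ℝ => (2⁻¹ : ℝ) • (∑ j, p j * p j))
      ((2⁻¹ : ℝ) • ∑ j, (q j • (ContinuousLinearMap.proj j : (Fin 2 → ℝ) →L[ℝ] ℝ)
        + q j • (ContinuousLinearMap.proj j : (Fin 2 → ℝ) →L[ℝ] ℝ))) q := by
    refine HasFDerivAt.const_smul (f := fun p : Fin 2 → ℝ => ∑ j, p j * p j) ?_ (2⁻¹ : ℝ)
    apply HasFDerivAt.fun_sum
    intro j _
    exact (hasFDerivAt_apply j q).mul (hasFDerivAt_apply j q)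
  rw [pgrad, e, h.fderiv]
  fin_cases i <;>
    simp [Fin.sum_univ_two, Pi.single_apply] <;> ring

lemma aux_sum_cond (x : Fin 2 → ℝ) :
    (∑ i, ((![1, 0] : Fin 2 → ℝ) i + pgrad (fun _ : Fin 2 → ℝ => (0 : ℝ)) x i) ^ 2) / 2
      = 1 / 2 := by
  rw [aux_pgrad_zero]
  simp [Fin.sum_univ_two]

lemma aux_pdiv_f {g : ℝ → ℝ} (hg : Differentiable ℝ g) (x : Fin 2 → ℝ) :
    pdiv (fun y i =>
      g (y 1) * ((![1, 0] : Fin 2 → ℝ) i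
        + pgrad (fun _ : Fin 2 → ℝ => (0 : ℝ)) y i)) x = 0 := by
  rw [pdiv, Fin.sum_univ_two]
  have e0 : (fun y : Fin 2 → ℝ => g (y 1) * ((![1, 0] : Fin 2 → ℝ) 0
      + pgrad (fun _ : Fin 2 → ℝ => (0 : ℝ)) y 0)) = fun y => g (y 1) := by
    funext y; rw [aux_pgrad_zero]; simp
  have e1 : (fun y : Fin 2 → ℝ => g (y 1) * ((![1, 0] : Fin 2 → ℝ) 1
      + pgrad (fun _ : Fin 2 → ℝ => (0 : ℝ)) y 1)) = fun _ => (0 : ℝ) := by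
    funext y; rw [aux_pgrad_zero]; simp
  rw [e0, e1, aux_fderiv_comp_snd hg, fderiv_fun_const]
  simp

noncomputable def gg (c : ℝ) (t : ℝ) : ℝ := 1 + c * Real.cos (2 * Real.pi * t)

lemma gg_diff (c : ℝ) : Differentiable ℝ (gg c) := by
  unfold gg
  exact (differentiable_const _).add ((differentiable_const _).mul
    (Real.differentiable_cos.comp ((differentiable_const _).mul differentiable_id)))

lemma gg_int (c : ℝ) : ∫ t in Set.Icc (0:ℝ) 1, gg c t = 1 := by
  rw [MeasureTheory.integral_Icc_eq_integral_Ioc,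
    ← intervalIntegral.integral_of_le (zero_le_one)]
  have h1 : IntervalIntegrable (fun x => Real.cos (2 * Real.pi * x)) volume 0 1 :=
    (Real.continuous_cos.comp (continuous_const.mul continuous_id)).intervalIntegrable 0 1
  simp only [gg]
  rw [intervalIntegral.integral_add intervalIntegrable_const (h1.const_mul c),
    intervalIntegral.integral_const_mul,
    intervalIntegral.integral_comp_mul_left (fun x => Real.cos x) (Real.two_pi_pos.ne')]
  simp [Real.sin_two_pi]

lemma mm_int (c : ℝ) :
    ∫ x in Set.Icc (0 : Fin 2 → ℝ) 1, gg c (x 1) = 1 := by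
  have key : ∀ x : Fin 2 → ℝ,
      Set.indicator (Set.Icc (0 : Fin 2 → ℝ) 1) (fun x => gg c (x 1)) x
        = ∏ i, Set.indicator (Set.Icc (0:ℝ) 1)
            ((![fun _ => (1:ℝ), gg c] : Fin 2 → ℝ → ℝ) i) (x i) := by
    intro x
    by_cases h : x ∈ Set.Icc (0 : Fin 2 → ℝ) 1
    · rw [Set.indicator_of_mem h]
      have hi : ∀ i, x i ∈ Set.Icc (0:ℝ) 1 := by
        intro i
        obtain ⟨h0, h1⟩ := h
        exact ⟨h0 i, h1 i⟩
      rw [Fin.prod_univ_two, Set.indicator_of_mem (hi 0), Set.indicator_of_mem (hi 1)]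
      simp
    · rw [Set.indicator_of_notMem h]
      have : ∃ i, x i ∉ Set.Icc (0:ℝ) 1 := by
        by_contra hc
        push_neg at hc
        exact h ⟨fun i => (hc i).1, fun i => (hc i).2⟩
      obtain ⟨i, hi⟩ := this
      exact (Finset.prod_eq_zero (Finset.mem_univ i)
        (Set.indicator_of_notMem hi _)).symm
  rw [← MeasureTheory.integral_indicator measurableSet_Icc]
  calc ∫ x : Fin 2 → ℝ, Set.indicator (Set.Icc (0 : Fin 2 → ℝ) 1) (fun x => gg c (x 1)) x
      = ∫ x : Fin 2 → ℝ, ∏ i, Set.indicator (Set.Icc (0:ℝ) 1)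
          ((![fun _ => (1:ℝ), gg c] : Fin 2 → ℝ → ℝ) i) (x i) :=
        integral_congr_ae (Filter.Eventually.of_forall key)
    _ = ∏ i, ∫ t : ℝ, Set.indicator (Set.Icc (0:ℝ) 1)
          ((![fun _ => (1:ℝ), gg c] : Fin 2 → ℝ → ℝ) i) t :=
        MeasureTheory.integral_fintype_prod_eq_prod _
    _ = 1 := by
        rw [Fin.prod_univ_two]
        simp only [Matrix.cons_val_zero, Matrix.cons_val_one, Matrix.head_cons]
        rw [MeasureTheory.integral_indicator measurableSet_Icc,
          MeasureTheory.integral_indicator measurableSet_Icc, gg_int]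
        simp [Real.volume_Icc]

lemma aux_pdiv_m {g : ℝ → ℝ} (hg : Differentiable ℝ g) (x : Fin 2 → ℝ) :
    pdiv (fun y i =>
      g (y 1) * pgrad (fun p : Fin 2 → ℝ => (∑ j, p j ^ 2) / 2)
        ((![1, 0] : Fin 2 → ℝ) + pgrad (fun _ : Fin 2 → ℝ => (0 : ℝ)) y) i) x = 0 := by
  have hq : ∀ y : Fin 2 → ℝ,
      (![1, 0] : Fin 2 → ℝ) + pgrad (fun _ : Fin 2 → ℝ => (0 : ℝ)) y
        = (![1, 0] : Fin 2 → ℝ) := by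
    intro y; rw [aux_pgrad_zero]; funext i; simp
  rw [pdiv, Fin.sum_univ_two]
  have e0 : (fun y : Fin 2 → ℝ => g (y 1) * pgrad (fun p : Fin 2 → ℝ => (∑ j, p j ^ 2) / 2)
      ((![1, 0] : Fin 2 → ℝ) + pgrad (fun _ : Fin 2 → ℝ => (0 : ℝ)) y) 0)
      = fun y => g (y 1) := by
    funext y; rw [hq, aux_gradH]; simp
  have e1 : (fun y : Fin 2 → ℝ => g (y 1) * pgrad (fun p : Fin 2 → ℝ => (∑ j, p j ^ 2) / 2)
      ((![1, 0] : Fin 2 → ℝ) + pgrad (fun _ : Fin 2 → ℝ => (0 : ℝ)) y) 1)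
      = fun _ => (0 : ℝ) := by
    funext y; rw [hq, aux_gradH]; simp
  rw [e0, e1, aux_fderiv_comp_snd hg, fderiv_fun_const]
  simp

/-- for `d = 2`, `H(x,p) = |p|²/2` and `P = (1,0)`, every `m(x₁,x₂) = f(x₂)`
with `f` of class `C¹`, together with `u ≡ 0`, solves the cell-problem system with
`H̄ = 1/2`; in particular, the set of `ℤ²`-periodic nonnegative mass-one solutions `m` is
infinite, so the projected Mather measure is not unique. -/
theorem mather_measure_not_unique_2d :
    (∀ f : ℝ → ℝ, ContDiff ℝ 1 f →
      (∀ x : Fin 2 → ℝ,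
        (∑ i, ((![1, 0] : Fin 2 → ℝ) i + pgrad (fun _ : Fin 2 → ℝ => (0 : ℝ)) x i) ^ 2) / 2
          = 1 / 2) ∧
      (∀ x : Fin 2 → ℝ,
        pdiv (fun y i =>
          f (y 1) * ((![1, 0] : Fin 2 → ℝ) i
            + pgrad (fun _ : Fin 2 → ℝ => (0 : ℝ)) y i)) x = 0)) ∧
    Set.Infinite {m : (Fin 2 → ℝ) → ℝ |
      ZPeriodic m ∧ (∀ x, 0 ≤ m x) ∧
      (∫ x in Set.Icc (0 : Fin 2 → ℝ) 1, m x) = 1 ∧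
      (∀ x : Fin 2 → ℝ,
        (∑ i, ((![1, 0] : Fin 2 → ℝ) i + pgrad (fun _ : Fin 2 → ℝ => (0 : ℝ)) x i) ^ 2) / 2
          = 1 / 2) ∧
      (∀ x : Fin 2 → ℝ,
        pdiv (fun y i =>
          m y * pgrad (fun p : Fin 2 → ℝ => (∑ j, p j ^ 2) / 2)
            ((![1, 0] : Fin 2 → ℝ) + pgrad (fun _ : Fin 2 → ℝ => (0 : ℝ)) y) i) x = 0)} := by
  constructor
  · intro f hf
    exact ⟨aux_sum_cond, aux_pdiv_f (hf.differentiable one_ne_zero)⟩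
  · apply Set.infinite_of_injective_forall_mem
      (f := fun n : ℕ => fun x : Fin 2 → ℝ => gg (((n : ℝ) + 2)⁻¹) (x 1))
    · intro n k h
      have h0 := congrFun h (fun _ => 0)
      simp only [gg, Real.cos_zero] at h0
      have hn : (0:ℝ) < (n:ℝ) + 2 := by positivity
      have hk : (0:ℝ) < (k:ℝ) + 2 := by positivity
      field_simp at h0
      rw [mul_zero, Real.cos_zero] at h0
      have : (n : ℝ) = (k : ℝ) := by nlinarith [h0]
      exact_mod_cast this
    · intro n
      set c : ℝ := ((n : ℝ) + 2)⁻¹ with hc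
      have hc0 : 0 < c := by positivity
      have hc1 : c ≤ 1 := by
        rw [hc]
        rw [inv_le_one_iff₀]
        right; linarith [Nat.cast_nonneg (α := ℝ) n]
      refine ⟨?_, ?_, mm_int c, aux_sum_cond, fun x => aux_pdiv_m (gg_diff c) x⟩
      · intro z x
        simp only [Pi.add_apply, gg]
        congr 1
        congr 1
        have : 2 * Real.pi * (x 1 + ((z 1 : ℤ) : ℝ))
            = 2 * Real.pi * x 1 + (z 1 : ℤ) * (2 * Real.pi) := by ring
        rw [this, Real.cos_add_int_mul_two_pi]
      · intro x
        have := Real.neg_one_le_cos (2 * Real.pi * x 1)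
        simp only [gg]
        nlinarith
end
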